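/- Let q be a prime power, L a field extension of Fq of degree m, and let H ∈ L^{k×n} and B ∈ L^{μ×n}. Let X be a random variable with values in L^n, and set S = HX and W = BX. If for every s with P(S = s) > 0 the conditional distribution of X given S = s is uniform on the coset {x ∈ L^n : Hx = s}, then I(S;W) ≤ (rank H + rank B − rank [H; B]) · m · log q, where [H; B] is the stacked (k+μ)×n matrix and ranks are over L. -/

import Mathlib

set_option autoImplicit false

open Matrix MeasureTheory


/-- key fiberwise sum identity -/
lemma fiber_sum_log {α β : Type*} [Fintype α] [Fintype β] [DecidableEq β]
    (e : α → β) (p : α → ℝ) (N : ℕ)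
    (hconst : ∀ x y, e x = e y → p x = p y)
    (hcard : ∀ x : α, (Finset.univ.filter fun y => e y = e x).card = N) :
    ∑ b : β, (∑ x ∈ Finset.univ.filter (fun y => e y = b), p x) *
        Real.log (∑ x ∈ Finset.univ.filter (fun y => e y = b), p x)
      = ∑ x : α, p x * Real.log ((N : ℝ) * p x) := by
  rw [← Finset.sum_fiberwise_of_maps_to (fun x _ => Finset.mem_univ (e x))
      (fun x => p x * Real.log ((N:ℝ) * p x))]
  refine Finset.sum_congr rfl fun b _ => ?_
  rcases (Finset.univ.filter fun y => e y = b).eq_empty_or_nonempty with h | h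
  · rw [h]; simp
  · obtain ⟨x₀, hx₀⟩ := h
    have hx₀b : e x₀ = b := (Finset.mem_filter.mp hx₀).2
    have hval : ∀ x ∈ Finset.univ.filter (fun y => e y = b), p x = p x₀ := fun x hx =>
      hconst x x₀ (((Finset.mem_filter.mp hx).2).trans hx₀b.symm)
    have hc : (Finset.univ.filter fun y => e y = b).card = N := by
      rw [← hx₀b]; exact hcard x₀
    have hsum1 : ∑ x ∈ Finset.univ.filter (fun y => e y = b), p x = (N:ℝ) * p x₀ := by
      rw [Finset.sum_congr rfl hval, Finset.sum_const, hc, nsmul_eq_mul]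
    have hsum2 : ∑ x ∈ Finset.univ.filter (fun y => e y = b), p x * Real.log ((N:ℝ) * p x)
        = (N:ℝ) * (p x₀ * Real.log ((N:ℝ) * p x₀)) := by
      rw [Finset.sum_congr rfl (fun x hx => by rw [hval x hx]), Finset.sum_const, hc,
        nsmul_eq_mul]
    rw [hsum1, hsum2]; ring

/-- entropy is at most log of the size of a support superset -/
lemma neg_sum_mul_log_le {β : Type*} [Fintype β] (g : β → ℝ) (hg : ∀ b, 0 ≤ g b)
    (hsum : ∑ b : β, g b = 1) (T : Finset β) (hT : ∀ b, g b ≠ 0 → b ∈ T)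
    (N : ℕ) (hN : 0 < N) (hTN : T.card ≤ N) :
    (- ∑ b : β, g b * Real.log (g b)) ≤ Real.log N := by
  have hzero : ∀ b ∈ Finset.univ, b ∉ T → g b * Real.log (g b) = 0 := by
    intro b _ hb
    have : g b = 0 := by by_contra h; exact hb (hT b h)
    simp [this]
  have h1 : ∑ b : β, g b * Real.log (g b) = ∑ b ∈ T, g b * Real.log (g b) :=
    (Finset.sum_subset T.subset_univ hzero).symm
  have hzero' : ∀ b ∈ Finset.univ, b ∉ T → g b = 0 := by
    intro b _ hb; by_contra h; exact hb (hT b h)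
  have hsum' : ∑ b ∈ T, g b = 1 := by
    rw [Finset.sum_subset T.subset_univ hzero']; exact hsum
  have hpt : ∀ b ∈ T, -(g b * Real.log (g b)) ≤ 1/(N:ℝ) - g b + g b * Real.log N := by
    intro b _
    by_cases hgb : g b = 0
    · simp only [hgb, Real.log_zero, mul_zero, zero_mul, neg_zero, sub_zero, add_zero]
      positivity
    · have hgbpos : 0 < g b := lt_of_le_of_ne (hg b) (Ne.symm hgb)
      have hNpos : (0:ℝ) < N := by exact_mod_cast hN
      have e2 := Real.log_le_sub_one_of_pos (x := ((N:ℝ) * g b)⁻¹) (by positivity)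
      have e1 : Real.log (((N:ℝ) * g b)⁻¹) = -(Real.log N + Real.log (g b)) := by
        rw [Real.log_inv, Real.log_mul (ne_of_gt hNpos) hgb]
      rw [e1] at e2
      have e3 := mul_le_mul_of_nonneg_left e2 (hg b)
      have e4 : g b * (((N:ℝ) * g b)⁻¹ - 1) = 1/(N:ℝ) - g b := by
        field_simp
      nlinarith [e3, e4]
  have h2 : (- ∑ b ∈ T, g b * Real.log (g b)) ≤ ∑ b ∈ T, (1/(N:ℝ) - g b + g b * Real.log N) := by
    rw [← Finset.sum_neg_distrib]
    exact Finset.sum_le_sum hpt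
  have h3 : ∑ b ∈ T, (1/(N:ℝ) - g b + g b * Real.log N)
      = T.card * (1/(N:ℝ)) - 1 + Real.log N := by
    rw [Finset.sum_add_distrib, Finset.sum_sub_distrib, ← Finset.sum_mul, hsum',
      Finset.sum_const, nsmul_eq_mul]
    ring
  have hNpos : (0:ℝ) < N := by exact_mod_cast hN
  have h4 : (T.card : ℝ) * (1/(N:ℝ)) ≤ 1 := by
    rw [mul_one_div, div_le_one hNpos]
    exact_mod_cast hTN
  rw [h1]
  linarith [h2, h3.le, h3.ge]

/-- decompose the law of `f ∘ X` into fibers. -/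
lemma meas_comp_eq_sum {Ω : Type} [Fintype Ω] [MeasurableSpace Ω] [MeasurableSingletonClass Ω]
    (P : Measure Ω) {α β : Type*} [Fintype α] [DecidableEq α] [DecidableEq β]
    (X : Ω → α) (f : α → β) (b : β) :
    P {ω | f (X ω) = b} = ∑ x ∈ Finset.univ.filter (fun x => f x = b), P {ω | X ω = x} := by
  rw [← measure_biUnion_finset]
  · congr 1
    ext ω
    simp only [Set.mem_iUnion, Finset.mem_filter, Finset.mem_univ, true_and, Set.mem_setOf_eq]
    constructor
    · intro h; exact ⟨X ω, h, rfl⟩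
    · rintro ⟨x, hx, rfl⟩; exact hx
  · intro x _ y _ hxy
    refine Set.disjoint_left.mpr fun ω h1 h2 => hxy ?_
    rw [← h1, ← h2]
  · intro x _
    exact (Set.toFinite _).measurableSet

lemma sum_toReal_meas_eq_one {Ω : Type} [Fintype Ω] [MeasurableSpace Ω]
    [MeasurableSingletonClass Ω]
    (P : Measure Ω) [IsProbabilityMeasure P] {β : Type*} [Fintype β] [DecidableEq β]
    (Y : Ω → β) : ∑ b : β, (P {ω | Y ω = b}).toReal = 1 := by
  rw [← ENNReal.toReal_sum (fun b _ => measure_ne_top P _)]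
  have : ∑ b : β, P {ω | Y ω = b} = P Set.univ := by
    rw [← measure_biUnion_finset]
    · congr 1
      ext ω
      simp only [Set.mem_iUnion, Finset.mem_univ, true_and, Set.mem_setOf_eq, Set.mem_univ,
        iff_true]
      exact ⟨Y ω, trivial, rfl⟩
    · intro x _ y _ hxy
      refine Set.disjoint_left.mpr fun ω h1 h2 => hxy ?_
      rw [← h1, ← h2]
    · intro x _
      exact (Set.toFinite _).measurableSet
  rw [this, measure_univ, ENNReal.toReal_one]

/-- cardinality of a fiber of `*ᵥ` equals the kernel cardinality -/
lemma fiber_card_eq_ker_card {L : Type} [Field L] [Fintype L] [DecidableEq L]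
    {n' : ℕ} {κ : Type*} [Fintype κ] (M : Matrix κ (Fin n') L) (x : Fin n' → L) :
    (Finset.univ.filter fun y => M *ᵥ y = M *ᵥ x).card
      = Nat.card (LinearMap.ker M.mulVecLin) := by
  classical
  rw [Nat.card_eq_fintype_card, ← Fintype.card_subtype]
  refine Fintype.card_congr ⟨fun y => ⟨y.1 - x, ?_⟩, fun z => ⟨z.1 + x, ?_⟩, ?_, ?_⟩
  · rw [LinearMap.mem_ker, mulVecLin_apply, mulVec_sub, y.2, sub_self]
  · have hz := z.2
    rw [LinearMap.mem_ker, mulVecLin_apply] at hz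
    show M *ᵥ (z.1 + x) = M *ᵥ x
    rw [mulVec_add, hz, zero_add]
  · intro y; ext i; simp
  · intro z; ext i; simp

lemma ker_card_eq {L : Type} [Field L] [Fintype L]
    {n' : ℕ} {κ : Type*} [Fintype κ] (M : Matrix κ (Fin n') L) :
    Nat.card (LinearMap.ker M.mulVecLin) = Fintype.card L ^ (n' - M.rank) := by
  classical
  rw [Nat.card_eq_fintype_card]
  have h1 : Fintype.card (LinearMap.ker M.mulVecLin)
      = Fintype.card L ^ Module.finrank L (LinearMap.ker M.mulVecLin) :=
    Module.card_eq_pow_finrank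
  have h2 := LinearMap.finrank_range_add_finrank_ker M.mulVecLin
  have h3 : Module.finrank L (Fin n' → L) = n' := Module.finrank_fin_fun L
  have h4 : M.rank = Module.finrank L (LinearMap.range M.mulVecLin) := rfl
  rw [h1]
  congr 1
  omega

lemma range_card_eq {L : Type} [Field L] [Fintype L]
    {n' : ℕ} {κ : Type*} [Fintype κ] (M : Matrix κ (Fin n') L) :
    Nat.card (LinearMap.range M.mulVecLin) = Fintype.card L ^ M.rank := by
  classical
  rw [Nat.card_eq_fintype_card]
  exact Module.card_eq_pow_finrank
/-- Shannon entropy (in nats) of a finitely-valued random variable. -/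
noncomputable def entropy {Ω α : Type*} [Fintype α] [MeasurableSpace Ω]
    (P : Measure Ω) (X : Ω → α) : ℝ :=
  - ∑ a : α, (P {ω | X ω = a}).toReal * Real.log (P {ω | X ω = a}).toReal

/-- Mutual information (in nats) `I(X;Y) = H(X) + H(Y) - H(X,Y)`. -/
noncomputable def mutualInfo {Ω α β : Type*} [Fintype α] [Fintype β] [MeasurableSpace Ω]
    (P : Measure Ω) (X : Ω → α) (Y : Ω → β) : ℝ :=
  entropy P X + entropy P Y - entropy P (fun ω => (X ω, Y ω))

/-- If `X` is conditionally uniform on each coset `{x : Hx = s}` of the code with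
parity-check matrix `H`, then with `S = HX` and `W = BX`,
`I(S;W) ≤ (rank H + rank B - rank [H; B]) · m · log q`. -/
theorem mutualInfo_le_of_cosetUniform
    (q m : ℕ) (hq : IsPrimePow q)
    (F L : Type) [Field F] [Fintype F] (hF : Fintype.card F = q)
    [Field L] [Fintype L] [Algebra F L] (hm : Module.finrank F L = m)
    (n k μ : ℕ)
    (H : Matrix (Fin k) (Fin n) L) (B : Matrix (Fin μ) (Fin n) L)
    (Ω : Type) [Fintype Ω] [MeasurableSpace Ω] [MeasurableSingletonClass Ω]
    (P : Measure Ω) [IsProbabilityMeasure P]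
    (X : Ω → Fin n → L)
    (hXunif : ∀ x₁ x₂ : Fin n → L, H *ᵥ x₁ = H *ᵥ x₂ →
      P {ω | X ω = x₁} = P {ω | X ω = x₂}) :
    mutualInfo P (fun ω => H *ᵥ X ω) (fun ω => B *ᵥ X ω) ≤
      ((H.rank : ℝ) + (B.rank : ℝ) - ((Matrix.fromRows H B).rank : ℝ)) *
        (m * Real.log q) := by

  classical
  have hq0 : 0 < q := hq.pos
  set p : (Fin n → L) → ℝ := fun x => (P {ω | X ω = x}).toReal with hp_def
  have hp0 : ∀ x, 0 ≤ p x := fun x => ENNReal.toReal_nonneg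
  have psum : ∑ x : Fin n → L, p x = 1 := sum_toReal_meas_eq_one P X
  set d : ℕ := Nat.card (LinearMap.ker H.mulVecLin) with hd_def
  set c : ℕ := Nat.card (LinearMap.ker (Matrix.fromRows H B).mulVecLin) with hc_def
  have hd_eq : d = Fintype.card L ^ (n - H.rank) := ker_card_eq H
  have hc_eq : c = Fintype.card L ^ (n - (Matrix.fromRows H B).rank) :=
    ker_card_eq (Matrix.fromRows H B)
  have hLpos : 0 < Fintype.card L := Fintype.card_pos
  have hdpos : (0:ℝ) < (d:ℝ) := by
    rw [hd_eq]; positivity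
  have hcpos : (0:ℝ) < (c:ℝ) := by
    rw [hc_eq]; positivity
  -- the two rank bounds
  have hr1 : H.rank ≤ n := by
    simpa using H.rank_le_card_width
  have hr12 : (Matrix.fromRows H B).rank ≤ n := by
    simpa using (Matrix.fromRows H B).rank_le_card_width
  -- entropy of S
  have hSlaw : ∀ s : Fin k → L, (P {ω | H *ᵥ X ω = s}).toReal
      = ∑ x ∈ Finset.univ.filter (fun x => H *ᵥ x = s), p x := by
    intro s
    rw [meas_comp_eq_sum P X (fun x => H *ᵥ x) s,
      ENNReal.toReal_sum (fun x _ => measure_ne_top P _)]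
  have hconstH : ∀ x y : Fin n → L, H *ᵥ x = H *ᵥ y → p x = p y :=
    fun x y h => congrArg ENNReal.toReal (hXunif x y h)
  have hcardH : ∀ x : Fin n → L,
      (Finset.univ.filter fun y => H *ᵥ y = H *ᵥ x).card = d :=
    fun x => fiber_card_eq_ker_card H x
  have hSval : entropy P (fun ω => H *ᵥ X ω) = -∑ x : Fin n → L, p x * Real.log ((d:ℝ) * p x) := by
    have h0 : entropy P (fun ω => H *ᵥ X ω)
        = - ∑ s : Fin k → L, (P {ω | H *ᵥ X ω = s}).toReal
            * Real.log ((P {ω | H *ᵥ X ω = s}).toReal) := rfl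
    rw [h0]
    congr 1
    rw [Finset.sum_congr rfl (fun s _ => by rw [hSlaw s])]
    exact fiber_sum_log (fun x => H *ᵥ x) p d hconstH hcardH
  -- entropy of the pair (S, W)
  have hiff : ∀ y x : Fin n → L,
      ((H *ᵥ y, B *ᵥ y) = (H *ᵥ x, B *ᵥ x)) ↔
        Matrix.fromRows H B *ᵥ y = Matrix.fromRows H B *ᵥ x := by
    intro y x
    constructor
    · intro h
      have h1 : H *ᵥ y = H *ᵥ x := congrArg Prod.fst h
      have h2 : B *ᵥ y = B *ᵥ x := congrArg Prod.snd h
      rw [Matrix.fromRows_mulVec, Matrix.fromRows_mulVec, h1, h2]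
    · intro h
      have h1 : H *ᵥ y = H *ᵥ x := funext fun i => congrFun h (Sum.inl i)
      have h2 : B *ᵥ y = B *ᵥ x := funext fun i => congrFun h (Sum.inr i)
      rw [h1, h2]
  have hSWlaw : ∀ sw : (Fin k → L) × (Fin μ → L),
      (P {ω | (H *ᵥ X ω, B *ᵥ X ω) = sw}).toReal
      = ∑ x ∈ Finset.univ.filter (fun x => (H *ᵥ x, B *ᵥ x) = sw), p x := by
    intro sw
    rw [meas_comp_eq_sum P X (fun x => (H *ᵥ x, B *ᵥ x)) sw,
      ENNReal.toReal_sum (fun x _ => measure_ne_top P _)]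
  have hconstHW : ∀ x y : Fin n → L,
      (H *ᵥ x, B *ᵥ x) = (H *ᵥ y, B *ᵥ y) → p x = p y :=
    fun x y h => hconstH x y (congrArg Prod.fst h)
  have hcardHW : ∀ x : Fin n → L,
      (Finset.univ.filter fun y => (H *ᵥ y, B *ᵥ y) = (H *ᵥ x, B *ᵥ x)).card = c := by
    intro x
    rw [Finset.filter_congr (fun y _ => hiff y x)]
    exact fiber_card_eq_ker_card (Matrix.fromRows H B) x
  have hSWval : entropy P (fun ω => (H *ᵥ X ω, B *ᵥ X ω))
      = -∑ x : Fin n → L, p x * Real.log ((c:ℝ) * p x) := by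
    have h0 : entropy P (fun ω => (H *ᵥ X ω, B *ᵥ X ω))
        = - ∑ sw : (Fin k → L) × (Fin μ → L), (P {ω | (H *ᵥ X ω, B *ᵥ X ω) = sw}).toReal
            * Real.log ((P {ω | (H *ᵥ X ω, B *ᵥ X ω) = sw}).toReal) := rfl
    rw [h0]
    congr 1
    rw [Finset.sum_congr rfl (fun sw _ => by rw [hSWlaw sw])]
    exact fiber_sum_log (fun x => (H *ᵥ x, B *ᵥ x)) p c hconstHW hcardHW
  -- entropy of W is bounded by the log of the cardinality of the range of B
  set g : (Fin μ → L) → ℝ := fun w => (P {ω | B *ᵥ X ω = w}).toReal with hg_def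
  have hg0 : ∀ w, 0 ≤ g w := fun w => ENNReal.toReal_nonneg
  have hgsum : ∑ w : Fin μ → L, g w = 1 := sum_toReal_meas_eq_one P (fun ω => B *ᵥ X ω)
  set T : Finset (Fin μ → L) :=
    Finset.univ.filter (fun w => w ∈ LinearMap.range B.mulVecLin) with hT_def
  have hTmem : ∀ w, g w ≠ 0 → w ∈ T := by
    intro w hw
    have hne : {ω | B *ᵥ X ω = w}.Nonempty := by
      rcases Set.eq_empty_or_nonempty {ω | B *ᵥ X ω = w} with h | h
      · exfalso; apply hw; rw [hg_def]; simp only [h, measure_empty, ENNReal.toReal_zero]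
      · exact h
    obtain ⟨ω, hω⟩ := hne
    rw [hT_def, Finset.mem_filter]
    exact ⟨Finset.mem_univ w, ⟨X ω, hω⟩⟩
  have hTcard : T.card = Fintype.card L ^ B.rank := by
    rw [hT_def, ← Fintype.card_subtype, ← range_card_eq B, Nat.card_eq_fintype_card]
  have hNpos : 0 < Fintype.card L ^ B.rank := by positivity
  have hW : entropy P (fun ω => B *ᵥ X ω) ≤ Real.log ((Fintype.card L ^ B.rank : ℕ) : ℝ) := by
    exact neg_sum_mul_log_le g hg0 hgsum T hTmem _ hNpos hTcard.le
  -- compute the difference of entropies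
  have hlog : ∑ x : Fin n → L, p x * Real.log ((c:ℝ) * p x)
      - ∑ x : Fin n → L, p x * Real.log ((d:ℝ) * p x)
      = Real.log (c:ℝ) - Real.log (d:ℝ) := by
    rw [← Finset.sum_sub_distrib]
    have hterm : ∀ x ∈ Finset.univ, p x * Real.log ((c:ℝ) * p x) - p x * Real.log ((d:ℝ) * p x)
        = p x * (Real.log (c:ℝ) - Real.log (d:ℝ)) := by
      intro x _
      by_cases hx : p x = 0
      · simp [hx]
      · rw [Real.log_mul (ne_of_gt hcpos) hx, Real.log_mul (ne_of_gt hdpos) hx]; ring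
    rw [Finset.sum_congr rfl hterm, ← Finset.sum_mul, psum, one_mul]
  have hMI : mutualInfo P (fun ω => H *ᵥ X ω) (fun ω => B *ᵥ X ω)
      = entropy P (fun ω => H *ᵥ X ω) + entropy P (fun ω => B *ᵥ X ω)
        - entropy P (fun ω => (H *ᵥ X ω, B *ᵥ X ω)) := rfl
  have hbound : mutualInfo P (fun ω => H *ᵥ X ω) (fun ω => B *ᵥ X ω)
      ≤ Real.log ((Fintype.card L ^ B.rank : ℕ) : ℝ)
        + (Real.log (c:ℝ) - Real.log (d:ℝ)) := by
    rw [hMI, hSval, hSWval]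
    linarith [hW, hlog]
  refine hbound.trans (le_of_eq ?_)
  -- now pure arithmetic with logs
  have hcardL : Fintype.card L = q ^ m := by
    rw [Module.card_eq_pow_finrank (K := F) (V := L), hF, hm]
  have hlogL : Real.log ((Fintype.card L : ℕ) : ℝ) = m * Real.log q := by
    rw [hcardL]; push_cast; rw [Real.log_pow]
  rw [hc_eq, hd_eq]
  push_cast
  rw [Real.log_pow, Real.log_pow, Real.log_pow, hlogL,
    Nat.cast_sub hr12, Nat.cast_sub hr1]
  ring
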